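/- Let G=(V,E) be a finite graph, partition V=V_1∪V_2, let E_i be the edges within V_i, B the edges between V_1 and V_2, B^0⊆B, and W_i the endvertices in V_i of edges in B∖B^0. Fix σ∈S_{1/q}^{W_1∪W_2} with σ(x)=σ(y) for every ⟨x,y⟩∈B∖B^0, where S_{1/q}={i : a_i=1/q}. Then, conditionally on the event C(B,σ) that all edges in B^0 are closed and the spins on W_1∪W_2 equal σ, under the DaC measure P^G the pair (spin, edge) configurations on (V_1,E_1) and on (V_2,E_2) are independent; moreover the conditional probability of (ξ,η) factorizes as P^{G_1}((ξ_{V_1},η_{E_1})|K_1) · P^{G_2}((ξ_{V_2},η_{E_2})|K_2) · 1{η≡0 on B^0} · ∏_{e∈B∖B^0} p^{η(e)}(1-p)^{1-η(e)}, where K_i is the event that the spins on W_i equal σ_{W_i}. -/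

import Mathlib

open Finset

/-- The relation on vertices generated by the open edges of a bond configuration `η`. -/
def openRel {V E : Type} (ends : E → V × V) (η : E → Bool) (x y : V) : Prop :=
  ∃ e, η e = true ∧ (ends e).1 = x ∧ (ends e).2 = y

/-- The number of connected components of the graph `(V, {e : η e = 1})`. -/
noncomputable def numComp {V E : Type} (ends : E → V × V) (η : E → Bool) : ℕ :=
  Nat.card (Quot (openRel ends η))

/-- The unnormalized random-cluster weight `q^{k(η)} ∏_e p^{η(e)}(1-p)^{1-η(e)}`. -/
noncomputable def rcWeight {V E : Type} [Fintype E] (ends : E → V × V) (p q : ℝ)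
    (η : E → Bool) : ℝ :=
  q ^ numComp ends η * ∏ e : E, (if η e then p else 1 - p)

/-- The random-cluster normalizing constant `Z^G_{p,q}`. -/
noncomputable def rcZ {V E : Type} [Fintype E] [DecidableEq E] (ends : E → V × V)
    (p q : ℝ) : ℝ :=
  ∑ η : E → Bool, rcWeight ends p q η

/-- The random-cluster measure `Φ^G_{p,q}` on `{0,1}^E`. -/
noncomputable def rcMeasure {V E : Type} [Fintype E] [DecidableEq E] (ends : E → V × V)
    (p q : ℝ) (η : E → Bool) : ℝ :=
  rcWeight ends p q η / rcZ ends p q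

/-- A spin configuration `σ` is constant on each connected component of `η`. -/
def compatible {V E : Type} (ends : E → V × V) (η : E → Bool) {s : ℕ}
    (σ : V → Fin s) : Prop :=
  ∀ x y, Relation.EqvGen (openRel ends η) x y → σ x = σ y

/-- The number `k^{σ,i}(η)` of connected components of `η` containing a vertex of spin `i`. -/
noncomputable def spinCompCount {V E : Type} (ends : E → V × V) (η : E → Bool) {s : ℕ}
    (σ : V → Fin s) (i : Fin s) : ℕ :=
  Nat.card {c : Quot (openRel ends η) // ∃ x, Quot.mk (openRel ends η) x = c ∧ σ x = i}

open Classical in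
/-- The divide-and-color measure `P^G` on `S^V × {0,1}^E`. -/
noncomputable def dacP {V E : Type} [Fintype E] [DecidableEq E] (ends : E → V × V)
    (p q : ℝ) {s : ℕ} (a : Fin s → ℝ) (σ : V → Fin s) (η : E → Bool) : ℝ :=
  if compatible ends η σ then
    rcMeasure ends p q η * ∏ i : Fin s, (a i) ^ spinCompCount ends η σ i
  else 0

/-- The endpoint map of the subgraph induced by the vertices satisfying `P`. -/
def restrEnds {V E : Type} (ends : E → V × V) (P : V → Prop) :
    {e : E // P (ends e).1 ∧ P (ends e).2} → {v : V // P v} × {v : V // P v} :=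
  fun e => (⟨(ends e.1).1, e.2.1⟩, ⟨(ends e.1).2, e.2.2⟩)

/-- `e` is a crossing edge between `V1` and its complement. -/
def crossing {V E : Type} (ends : E → V × V) (V1 : Finset V) (e : E) : Prop :=
  ¬(((ends e).1 ∈ V1) ↔ ((ends e).2 ∈ V1))

/-- `W_1 ∪ W_2`: the endvertices of the crossing edges in `B ∖ B0`. -/
def bridgeVerts {V E : Type} (ends : E → V × V) (V1 : Finset V) (B0 : Finset E) :
    Set V :=
  {x | ∃ e, crossing ends V1 e ∧ e ∉ B0 ∧ ((ends e).1 = x ∨ (ends e).2 = x)}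

open Classical in
/-- The probability of the event `C(B,σ)`: all edges of `B0` closed and spins on
`W_1 ∪ W_2` equal to `σ`. -/
noncomputable def probC {V E : Type} [Fintype V] [DecidableEq V] [Fintype E] [DecidableEq E]
    (ends : E → V × V) (p q : ℝ) {s : ℕ} (a : Fin s → ℝ) (V1 : Finset V)
    (B0 : Finset E) (σ : V → Fin s) : ℝ :=
  ∑ ξ : V → Fin s, ∑ η : E → Bool,
    if (∀ e ∈ B0, η e = false) ∧ (∀ x ∈ bridgeVerts ends V1 B0, ξ x = σ x) then
      dacP ends p q a ξ η
    else 0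

open Classical in
/-- The probability under the DaC measure of the subgraph `G_P` of the event `K`:
spins on the bridge vertices inside `G_P` equal to `σ`. -/
noncomputable def probK {V E : Type} [Fintype V] [DecidableEq V] [Fintype E] [DecidableEq E]
    (ends : E → V × V) (p q : ℝ) {s : ℕ} (a : Fin s → ℝ) (P : V → Prop)
    (Wv : Set V) (σ : V → Fin s) : ℝ :=
  ∑ ξ : {v : V // P v} → Fin s, ∑ η : {e : E // P (ends e).1 ∧ P (ends e).2} → Bool,
    if ∀ x : {v : V // P v}, (x : V) ∈ Wv → ξ x = σ (x : V) then
      dacP (restrEnds ends P) p q a ξ η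
    else 0


section DaCAux

variable {V E : Type}

open Classical in
/-- Unnormalized DaC weight. -/
noncomputable def dacW [Fintype E] [DecidableEq E] (ends : E → V × V)
    (p q : ℝ) {s : ℕ} (a : Fin s → ℝ) (ξ : V → Fin s) (η : E → Bool) : ℝ :=
  if compatible ends η ξ then
    rcWeight ends p q η * ∏ i : Fin s, (a i) ^ spinCompCount ends η ξ i
  else 0

lemma dacP_eq [Fintype E] [DecidableEq E] (ends : E → V × V) (p q : ℝ) {s : ℕ}
    (a : Fin s → ℝ) (ξ : V → Fin s) (η : E → Bool) :
    dacP ends p q a ξ η = dacW ends p q a ξ η / rcZ ends p q := by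
  unfold dacP dacW rcMeasure
  split
  · rw [div_mul_eq_mul_div]
  · simp

lemma eqvGen_sub_to_full (ends : E → V × V) (η : E → Bool) (P : V → Prop)
    {x y : {v : V // P v}}
    (h : Relation.EqvGen (openRel (restrEnds ends P) (fun e => η e.1)) x y) :
    Relation.EqvGen (openRel ends η) x.1 y.1 := by
  induction h with
  | rel x y hr =>
      obtain ⟨e, he, h1, h2⟩ := hr
      exact Relation.EqvGen.rel _ _ ⟨e.1, he, by rw [← h1]; rfl, by rw [← h2]; rfl⟩
  | refl x => exact Relation.EqvGen.refl _
  | symm x y _ ih => exact Relation.EqvGen.symm _ _ ih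
  | trans x y z _ _ ih1 ih2 => exact Relation.EqvGen.trans _ _ _ ih1 ih2

lemma compat_restrict {s : ℕ} (ends : E → V × V) (η : E → Bool) (ξ : V → Fin s)
    (P : V → Prop) (h : compatible ends η ξ) :
    compatible (restrEnds ends P) (fun e => η e.1) (fun x => ξ x.1) :=
  fun x y hxy => h x.1 y.1 (eqvGen_sub_to_full ends η P hxy)

/-- The spin of a component. -/
def spinQ {s : ℕ} (ends : E → V × V) (η : E → Bool) (ξ : V → Fin s)
    (hcomp : compatible ends η ξ) : Quot (openRel ends η) → Fin s :=
  Quot.lift ξ (fun u v huv => hcomp u v (Relation.EqvGen.rel u v huv))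

@[simp] lemma spinQ_mk {s : ℕ} (ends : E → V × V) (η : E → Bool) (ξ : V → Fin s)
    (hcomp : compatible ends η ξ) (x : V) :
    spinQ ends η ξ hcomp (Quot.mk _ x) = ξ x := rfl

end DaCAux

section DaCAux2

variable {V E : Type}

lemma confine (ends : E → V × V) (η : E → Bool) (P : V → Prop) (Wv : Set V)
    (hcrossW : ∀ e, η e = true → ¬(P (ends e).1 ↔ P (ends e).2) →
      (ends e).1 ∈ Wv ∧ (ends e).2 ∈ Wv)
    {x y : V} (h : Relation.EqvGen (openRel ends η) x y) :
    ((∃ u ∈ Wv, Relation.EqvGen (openRel ends η) x u ∧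
        ∀ hx : P x, ∃ hu : P u, Relation.EqvGen
          (openRel (restrEnds ends P) (fun e => η e.1)) ⟨x, hx⟩ ⟨u, hu⟩)
     ∧ (∃ u ∈ Wv, Relation.EqvGen (openRel ends η) y u ∧
        ∀ hy : P y, ∃ hu : P u, Relation.EqvGen
          (openRel (restrEnds ends P) (fun e => η e.1)) ⟨y, hy⟩ ⟨u, hu⟩))
    ∨ ((P x ↔ P y) ∧ ∀ (hx : P x) (hy : P y),
        Relation.EqvGen (openRel (restrEnds ends P) (fun e => η e.1)) ⟨x, hx⟩ ⟨y, hy⟩) := by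
  induction h with
  | rel x y hr =>
      obtain ⟨e, he, h1, h2⟩ := hr
      subst h1; subst h2
      by_cases hPxy : P (ends e).1 ↔ P (ends e).2
      · refine Or.inr ⟨hPxy, fun hx hy => ?_⟩
        exact Relation.EqvGen.rel _ _ ⟨⟨e, hx, hy⟩, he, rfl, rfl⟩
      · obtain ⟨hw1, hw2⟩ := hcrossW e he hPxy
        exact Or.inl ⟨⟨_, hw1, Relation.EqvGen.refl _,
            fun hx => ⟨hx, Relation.EqvGen.refl _⟩⟩,
          ⟨_, hw2, Relation.EqvGen.refl _, fun hy => ⟨hy, Relation.EqvGen.refl _⟩⟩⟩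
  | refl x => exact Or.inr ⟨Iff.rfl, fun hx hy => Relation.EqvGen.refl _⟩
  | symm x y hxy ih =>
      rcases ih with ⟨d1, d2⟩ | ⟨hiff, hsub⟩
      · exact Or.inl ⟨d2, d1⟩
      · exact Or.inr ⟨hiff.symm, fun hy hx => Relation.EqvGen.symm _ _ (hsub hx hy)⟩
  | trans x y z hxy hyz ih1 ih2 =>
      rcases ih1 with ⟨d1, d1'⟩ | ⟨hiff1, hsub1⟩
      · rcases ih2 with ⟨d2, d2'⟩ | ⟨hiff2, hsub2⟩
        · exact Or.inl ⟨d1, d2'⟩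
        · obtain ⟨u, hu, hyu, hsu⟩ := d1'
          refine Or.inl ⟨d1, ⟨u, hu,
            Relation.EqvGen.trans _ _ _ (Relation.EqvGen.symm _ _ hyz) hyu, fun hz => ?_⟩⟩
          have hy : P y := hiff2.mpr hz
          obtain ⟨hu', hpath⟩ := hsu hy
          exact ⟨hu', Relation.EqvGen.trans _ _ _
            (Relation.EqvGen.symm _ _ (hsub2 hy hz)) hpath⟩
      · rcases ih2 with ⟨d2, d2'⟩ | ⟨hiff2, hsub2⟩
        · obtain ⟨u, hu, hyu, hsu⟩ := d2
          refine Or.inl ⟨⟨u, hu, Relation.EqvGen.trans _ _ _ hxy hyu, fun hx => ?_⟩, d2'⟩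
          have hy : P y := hiff1.mp hx
          obtain ⟨hu', hpath⟩ := hsu hy
          exact ⟨hu', Relation.EqvGen.trans _ _ _ (hsub1 hx hy) hpath⟩
        · exact Or.inr ⟨hiff1.trans hiff2, fun hx hz =>
            Relation.EqvGen.trans _ _ _ (hsub1 hx (hiff1.mp hx))
              (hsub2 (hiff1.mp hx) hz)⟩

end DaCAux2

section DaCAux3

variable {V E : Type}

lemma compat_of_parts [DecidableEq V] {s : ℕ} (ends : E → V × V) (η : E → Bool)
    (ξ σ : V → Fin s) (V1 : Finset V) (B0 : Finset E)
    (hηB0 : ∀ e ∈ B0, η e = false)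
    (hξσ : ∀ x ∈ bridgeVerts ends V1 B0, ξ x = σ x)
    (hσeq : ∀ e : E, crossing ends V1 e → e ∉ B0 → σ (ends e).1 = σ (ends e).2)
    (h1 : compatible (restrEnds ends (fun v => v ∈ V1)) (fun e => η e.1) (fun x => ξ x.1))
    (h2 : compatible (restrEnds ends (fun v => v ∉ V1)) (fun e => η e.1) (fun x => ξ x.1)) :
    compatible ends η ξ := by
  intro x y h
  induction h with
  | rel x y hr =>
      obtain ⟨e, he, hx1, hy1⟩ := hr
      subst hx1; subst hy1
      by_cases hcr : crossing ends V1 e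
      · have heB0 : e ∉ B0 := fun hmem => by simp [hηB0 e hmem] at he
        have hw1 : (ends e).1 ∈ bridgeVerts ends V1 B0 := ⟨e, hcr, heB0, Or.inl rfl⟩
        have hw2 : (ends e).2 ∈ bridgeVerts ends V1 B0 := ⟨e, hcr, heB0, Or.inr rfl⟩
        rw [hξσ _ hw1, hξσ _ hw2, hσeq e hcr heB0]
      · unfold crossing at hcr
        rw [not_not] at hcr
        by_cases hin : (ends e).1 ∈ V1
        · exact h1 ⟨_, hin⟩ ⟨_, hcr.mp hin⟩
            (Relation.EqvGen.rel _ _ ⟨⟨e, hin, hcr.mp hin⟩, he, rfl, rfl⟩)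
        · exact h2 ⟨_, hin⟩ ⟨_, fun hmm => hin (hcr.mpr hmm)⟩
            (Relation.EqvGen.rel _ _ ⟨⟨e, hin, fun hmm => hin (hcr.mpr hmm)⟩, he, rfl, rfl⟩)
  | refl x => rfl
  | symm _ _ _ ih => exact ih.symm
  | trans _ _ _ _ _ ih1 ih2 => exact ih1.trans ih2

/-- The map from components of a restricted graph to components of the full graph. -/
def quotMap (ends : E → V × V) (η : E → Bool) (P : V → Prop) :
    Quot (openRel (restrEnds ends P) (fun e => η e.1)) → Quot (openRel ends η) :=
  Quot.lift (fun x => Quot.mk _ x.1) (fun u v huv => Quot.sound (by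
    obtain ⟨e, he, h1, h2⟩ := huv
    exact ⟨e.1, he, by rw [← h1]; rfl, by rw [← h2]; rfl⟩))

@[simp] lemma quotMap_mk (ends : E → V × V) (η : E → Bool) (P : V → Prop)
    (x : {v : V // P v}) :
    quotMap ends η P (Quot.mk _ x) = Quot.mk _ x.1 := rfl

lemma avoid_transfer (ends : E → V × V) (η : E → Bool) (Wv : Set V) (P : V → Prop)
    (hcrossW : ∀ e, η e = true → ¬(P (ends e).1 ↔ P (ends e).2) →
      (ends e).1 ∈ Wv ∧ (ends e).2 ∈ Wv)
    (c : Quot (openRel (restrEnds ends P) (fun e => η e.1)))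
    (hA : ∀ x, Quot.mk _ x = c → x.1 ∉ Wv) :
    ∀ y, Quot.mk (openRel ends η) y = quotMap ends η P c → y ∉ Wv := by
  obtain ⟨x, rfl⟩ := Quot.exists_rep c
  intro y hy hyW
  rw [quotMap_mk] at hy
  have hEq : Relation.EqvGen (openRel ends η) x.1 y :=
    Relation.EqvGen.symm _ _ (Quot.eq.mp hy)
  rcases confine ends η P Wv hcrossW hEq with ⟨⟨u, hu, _, hsub⟩, _⟩ | ⟨hiff, hsub⟩
  · obtain ⟨hu', hpath⟩ := hsub x.2
    exact hA ⟨u, hu'⟩ (Quot.eq.mpr (Relation.EqvGen.symm _ _ hpath)) hu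
  · have hy' : P y := hiff.mp x.2
    exact hA ⟨y, hy'⟩ (Quot.eq.mpr (Relation.EqvGen.symm _ _ (hsub x.2 hy'))) hyW

lemma quotMap_inj_aux (ends : E → V × V) (η : E → Bool) (Wv : Set V) (P : V → Prop)
    (hcrossW : ∀ e, η e = true → ¬(P (ends e).1 ↔ P (ends e).2) →
      (ends e).1 ∈ Wv ∧ (ends e).2 ∈ Wv)
    (c c' : Quot (openRel (restrEnds ends P) (fun e => η e.1)))
    (hA : ∀ x, Quot.mk _ x = c → x.1 ∉ Wv)
    (h : quotMap ends η P c = quotMap ends η P c') : c = c' := by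
  obtain ⟨x, rfl⟩ := Quot.exists_rep c
  obtain ⟨x', rfl⟩ := Quot.exists_rep c'
  rw [quotMap_mk, quotMap_mk] at h
  have hEq : Relation.EqvGen (openRel ends η) x.1 x'.1 := Quot.eq.mp h
  rcases confine ends η P Wv hcrossW hEq with ⟨⟨u, hu, _, hsub⟩, _⟩ | ⟨hiff, hsub⟩
  · obtain ⟨hu', hpath⟩ := hsub x.2
    exact absurd hu (hA ⟨u, hu'⟩ (Quot.eq.mpr (Relation.EqvGen.symm _ _ hpath)))
  · exact Quot.eq.mpr (hsub x.2 x'.2)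

lemma quotMap_cross (ends : E → V × V) (η : E → Bool) (Wv : Set V) (P Q : V → Prop)
    (hPQ : ∀ v, P v → Q v → False)
    (hcrossW : ∀ e, η e = true → ¬(P (ends e).1 ↔ P (ends e).2) →
      (ends e).1 ∈ Wv ∧ (ends e).2 ∈ Wv)
    (c : Quot (openRel (restrEnds ends P) (fun e => η e.1)))
    (c' : Quot (openRel (restrEnds ends Q) (fun e => η e.1)))
    (hA : ∀ x, Quot.mk _ x = c → x.1 ∉ Wv)
    (h : quotMap ends η P c = quotMap ends η Q c') : False := by
  obtain ⟨x, rfl⟩ := Quot.exists_rep c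
  obtain ⟨x', rfl⟩ := Quot.exists_rep c'
  rw [quotMap_mk, quotMap_mk] at h
  have hEq : Relation.EqvGen (openRel ends η) x.1 x'.1 := Quot.eq.mp h
  rcases confine ends η P Wv hcrossW hEq with ⟨⟨u, hu, _, hsub⟩, _⟩ | ⟨hiff, hsub⟩
  · obtain ⟨hu', hpath⟩ := hsub x.2
    exact hA ⟨u, hu'⟩ (Quot.eq.mpr (Relation.EqvGen.symm _ _ hpath)) hu
  · exact hPQ x'.1 (hiff.mp x.2) x'.2

end DaCAux3

section DaCAux4

variable {V E : Type}

lemma prodComp [Fintype V] [Fintype E] {s : ℕ} (ends : E → V × V) (η : E → Bool)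
    (q : ℝ) (a : Fin s → ℝ) (ξ : V → Fin s) (hcomp : compatible ends η ξ)
    [Fintype (Quot (openRel ends η))] :
    q ^ numComp ends η * ∏ i : Fin s, a i ^ spinCompCount ends η ξ i
      = ∏ c : Quot (openRel ends η), q * a (spinQ ends η ξ hcomp c) := by
  classical
  rw [Finset.prod_mul_distrib, Finset.prod_const, Finset.card_univ]
  congr 1
  · congr 1
    rw [numComp, Nat.card_eq_fintype_card]
  · rw [← Finset.prod_fiberwise Finset.univ (spinQ ends η ξ hcomp)
      (fun c => a (spinQ ends η ξ hcomp c))]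
    refine Finset.prod_congr rfl fun i _ => ?_
    have hcard : spinCompCount ends η ξ i
        = (Finset.univ.filter (fun c => spinQ ends η ξ hcomp c = i)).card := by
      rw [spinCompCount, Nat.card_eq_fintype_card, Fintype.card_subtype]
      congr 1
      apply Finset.filter_congr
      intro c _
      constructor
      · rintro ⟨x, rfl, rfl⟩; rfl
      · intro h
        obtain ⟨x, rfl⟩ := Quot.exists_rep c
        exact ⟨x, rfl, h⟩
    rw [hcard, Finset.prod_congr rfl
      (fun c hc => by rw [(Finset.mem_filter.mp hc).2]), Finset.prod_const]

lemma prod_eq_prod_subtype_of_one [Fintype V] (Pp : V → Prop) [DecidablePred Pp]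
    (g : V → ℝ) (h : ∀ x, ¬ Pp x → g x = 1) :
    ∏ x, g x = ∏ x : {x // Pp x}, g x.1 := by
  rw [← Finset.prod_subtype (Finset.univ.filter Pp) (by simp) g, Finset.prod_filter]
  apply Finset.prod_congr rfl
  intro x _
  by_cases hx : Pp x
  · rw [if_pos hx]
  · rw [if_neg hx, h x hx]

end DaCAux4

section DaCAux5

variable {V E : Type}

lemma prod_quot_split [Fintype V] [DecidableEq V] [Fintype E] (ends : E → V × V)
    (q : ℝ) {s : ℕ} (a : Fin s → ℝ) (hq : q ≠ 0)
    (V1 : Finset V) (B0 : Finset E) (η : E → Bool) (ξ σ : V → Fin s)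
    (hηB0 : ∀ e ∈ B0, η e = false)
    (hξσ : ∀ x ∈ bridgeVerts ends V1 B0, ξ x = σ x)
    (hσq : ∀ x ∈ bridgeVerts ends V1 B0, a (σ x) = 1 / q)
    (hcomp : compatible ends η ξ)
    (h1 : compatible (restrEnds ends (fun v => v ∈ V1)) (fun e => η e.1) (fun x => ξ x.1))
    (h2 : compatible (restrEnds ends (fun v => v ∉ V1)) (fun e => η e.1) (fun x => ξ x.1))
    [Fintype (Quot (openRel ends η))]
    [Fintype (Quot (openRel (restrEnds ends (fun v => v ∈ V1)) (fun e => η e.1)))]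
    [Fintype (Quot (openRel (restrEnds ends (fun v => v ∉ V1)) (fun e => η e.1)))] :
    ∏ c, q * a (spinQ ends η ξ hcomp c)
      = (∏ c, q * a (spinQ _ _ _ h1 c)) * ∏ c, q * a (spinQ _ _ _ h2 c) := by
  classical
  have hone : ∀ x ∈ bridgeVerts ends V1 B0, q * a (ξ x) = 1 := by
    intro x hx
    rw [hξσ x hx, hσq x hx]
    field_simp
  have hcrossW1 : ∀ e, η e = true → ¬((ends e).1 ∈ V1 ↔ (ends e).2 ∈ V1) →
      (ends e).1 ∈ bridgeVerts ends V1 B0 ∧ (ends e).2 ∈ bridgeVerts ends V1 B0 := by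
    intro e he hcr
    have heB0 : e ∉ B0 := fun hm => by simp [hηB0 e hm] at he
    exact ⟨⟨e, hcr, heB0, Or.inl rfl⟩, ⟨e, hcr, heB0, Or.inr rfl⟩⟩
  have hcrossW2 : ∀ e, η e = true → ¬((ends e).1 ∉ V1 ↔ (ends e).2 ∉ V1) →
      (ends e).1 ∈ bridgeVerts ends V1 B0 ∧ (ends e).2 ∈ bridgeVerts ends V1 B0 :=
    fun e he hcr => hcrossW1 e he (by rwa [not_iff_not] at hcr)
  -- reductions to subtype products
  have red : ∏ c, q * a (spinQ ends η ξ hcomp c)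
      = ∏ c : {c // ∀ x, Quot.mk _ x = c → x ∉ bridgeVerts ends V1 B0},
          q * a (spinQ ends η ξ hcomp c.1) := by
    apply prod_eq_prod_subtype_of_one
    intro c hc
    push_neg at hc
    obtain ⟨x, hxc, hxW⟩ := hc
    subst hxc
    rw [spinQ_mk]
    exact hone x hxW
  have red1 : ∏ c, q * a (spinQ _ _ _ h1 c)
      = ∏ c : {c // ∀ x, Quot.mk _ x = c → x.1 ∉ bridgeVerts ends V1 B0},
          q * a (spinQ _ _ _ h1 c.1) := by
    apply prod_eq_prod_subtype_of_one
    intro c hc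
    push_neg at hc
    obtain ⟨x, hxc, hxW⟩ := hc
    subst hxc
    rw [spinQ_mk]
    exact hone x.1 hxW
  have red2 : ∏ c, q * a (spinQ _ _ _ h2 c)
      = ∏ c : {c // ∀ x, Quot.mk _ x = c → x.1 ∉ bridgeVerts ends V1 B0},
          q * a (spinQ _ _ _ h2 c.1) := by
    apply prod_eq_prod_subtype_of_one
    intro c hc
    push_neg at hc
    obtain ⟨x, hxc, hxW⟩ := hc
    subst hxc
    rw [spinQ_mk]
    exact hone x.1 hxW
  rw [red, red1, red2]
  -- the bijection
  let T1 := {c : Quot (openRel (restrEnds ends (fun v => v ∈ V1)) (fun e => η e.1)) //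
      ∀ x, Quot.mk _ x = c → x.1 ∉ bridgeVerts ends V1 B0}
  let T2 := {c : Quot (openRel (restrEnds ends (fun v => v ∉ V1)) (fun e => η e.1)) //
      ∀ x, Quot.mk _ x = c → x.1 ∉ bridgeVerts ends V1 B0}
  refine (Fintype.prod_bijective
    (Sum.elim
      (fun (c : T1) => (⟨quotMap ends η _ c.1,
        avoid_transfer ends η (bridgeVerts ends V1 B0) _ hcrossW1 c.1 c.2⟩ :
          {c // ∀ x, Quot.mk _ x = c → x ∉ bridgeVerts ends V1 B0}))
      (fun (c : T2) => ⟨quotMap ends η _ c.1,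
        avoid_transfer ends η (bridgeVerts ends V1 B0) _ hcrossW2 c.1 c.2⟩))
    ⟨?_, ?_⟩
    (Sum.elim (fun (c : T1) => q * a (spinQ _ _ _ h1 c.1))
      (fun (c : T2) => q * a (spinQ _ _ _ h2 c.1)))
    (fun c => q * a (spinQ ends η ξ hcomp c.1)) ?_).symm.trans ?_
  · -- injective
    rintro (⟨c, hc⟩ | ⟨c, hc⟩) (⟨c', hc'⟩ | ⟨c', hc'⟩) hff
    · have hval : quotMap ends η _ c = quotMap ends η _ c' :=
        congrArg Subtype.val hff
      exact congrArg Sum.inl (Subtype.ext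
        (quotMap_inj_aux ends η _ _ hcrossW1 c c' hc hval))
    · have hval : quotMap ends η _ c = quotMap ends η _ c' :=
        congrArg Subtype.val hff
      exact absurd hval (fun hval => quotMap_cross ends η (bridgeVerts ends V1 B0)
        (fun v => v ∈ V1) (fun v => v ∉ V1) (fun v hv hv' => hv' hv)
        hcrossW1 c c' hc hval)
    · have hval : quotMap ends η _ c = quotMap ends η _ c' :=
        congrArg Subtype.val hff
      exact absurd hval (fun hval => quotMap_cross ends η (bridgeVerts ends V1 B0)
        (fun v => v ∉ V1) (fun v => v ∈ V1) (fun v hv hv' => hv hv')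
        hcrossW2 c c' hc hval)
    · have hval : quotMap ends η _ c = quotMap ends η _ c' :=
        congrArg Subtype.val hff
      exact congrArg Sum.inr (Subtype.ext
        (quotMap_inj_aux ends η _ _ hcrossW2 c c' hc hval))
  · -- surjective
    rintro ⟨c, hc⟩
    obtain ⟨y, rfl⟩ := Quot.exists_rep c
    by_cases hy : y ∈ V1
    · refine ⟨Sum.inl ⟨Quot.mk _ ⟨y, hy⟩, ?_⟩, ?_⟩
      · intro z hz
        exact hc z.1 (Quot.eq.mpr (eqvGen_sub_to_full ends η _ (Quot.eq.mp hz)))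
      · rfl
    · refine ⟨Sum.inr ⟨Quot.mk _ ⟨y, hy⟩, ?_⟩, ?_⟩
      · intro z hz
        exact hc z.1 (Quot.eq.mpr (eqvGen_sub_to_full ends η _ (Quot.eq.mp hz)))
      · rfl
  · -- value match
    rintro (⟨c, hc⟩ | ⟨c, hc⟩)
    · obtain ⟨x, rfl⟩ := Quot.exists_rep c
      rfl
    · obtain ⟨x, rfl⟩ := Quot.exists_rep c
      rfl
  · -- sum over sum type splits
    rw [Fintype.prod_sum_type]
    rfl
end DaCAux5

section DaCAux6

variable {V E : Type}

open Classical in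
lemma edge_prod_split [Fintype E] [DecidableEq E] [DecidableEq V] (ends : E → V × V)
    (p : ℝ) (V1 : Finset V) (B0 : Finset E) (hB0 : ∀ e ∈ B0, crossing ends V1 e)
    (η : E → Bool) (hηB0 : ∀ e ∈ B0, η e = false) :
    ∏ e : E, (if η e then p else 1 - p)
    = (∏ e : {e : E // (ends e).1 ∈ V1 ∧ (ends e).2 ∈ V1}, (if η e.1 then p else 1 - p))
      * (∏ e : {e : E // (ends e).1 ∉ V1 ∧ (ends e).2 ∉ V1}, (if η e.1 then p else 1 - p))
      * (∏ e ∈ B0, (1 - p))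
      * ∏ e : {e : E // crossing ends V1 e ∧ e ∉ B0}, (if η e.1 then p else 1 - p) := by
  classical
  rw [← Finset.prod_filter_mul_prod_filter_not Finset.univ (fun e => crossing ends V1 e)
    (fun e => if η e then p else 1 - p)]
  have hcr : ∏ e ∈ Finset.univ.filter (fun e => crossing ends V1 e), (if η e then p else 1 - p)
      = (∏ e ∈ B0, (1 - p))
        * ∏ e : {e : E // crossing ends V1 e ∧ e ∉ B0}, (if η e.1 then p else 1 - p) := by
    rw [← Finset.prod_filter_mul_prod_filter_not
      (Finset.univ.filter (fun e => crossing ends V1 e)) (fun e => e ∈ B0)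
      (fun e => if η e then p else 1 - p)]
    congr 1
    · rw [Finset.filter_filter]
      have hfe : Finset.filter (fun e => crossing ends V1 e ∧ e ∈ B0) Finset.univ = B0 := by
        ext e
        simp only [Finset.mem_filter, Finset.mem_univ, true_and]
        exact ⟨fun h => h.2, fun h => ⟨hB0 e h, h⟩⟩
      rw [hfe]
      apply Finset.prod_congr rfl
      intro e he
      rw [hηB0 e he]
      simp
    · rw [Finset.filter_filter]
      exact Finset.prod_subtype _ (by simp) _
  have hnc : ∏ e ∈ Finset.univ.filter (fun e => ¬ crossing ends V1 e), (if η e then p else 1 - p)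
      = (∏ e : {e : E // (ends e).1 ∈ V1 ∧ (ends e).2 ∈ V1}, (if η e.1 then p else 1 - p))
        * ∏ e : {e : E // (ends e).1 ∉ V1 ∧ (ends e).2 ∉ V1}, (if η e.1 then p else 1 - p) := by
    rw [← Finset.prod_filter_mul_prod_filter_not
      (Finset.univ.filter (fun e => ¬ crossing ends V1 e)) (fun e => (ends e).1 ∈ V1)
      (fun e => if η e then p else 1 - p)]
    congr 1
    · rw [Finset.filter_filter]
      apply Finset.prod_subtype
      intro e
      simp only [Finset.mem_filter, Finset.mem_univ, true_and]
      unfold crossing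
      constructor
      · rintro ⟨hnc, h1⟩
        rw [not_not] at hnc
        exact ⟨h1, hnc.mp h1⟩
      · rintro ⟨h1, h2⟩
        exact ⟨by rw [not_not]; exact ⟨fun _ => h2, fun _ => h1⟩, h1⟩
    · rw [Finset.filter_filter]
      apply Finset.prod_subtype
      intro e
      simp only [Finset.mem_filter, Finset.mem_univ, true_and]
      unfold crossing
      constructor
      · rintro ⟨hnc, h1⟩
        rw [not_not] at hnc
        exact ⟨h1, fun h => h1 (hnc.mpr h)⟩
      · rintro ⟨h1, h2⟩
        exact ⟨by rw [not_not]; exact ⟨fun h => absurd h h1, fun h => absurd h h2⟩, h1⟩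
  rw [hcr, hnc]
  ring

end DaCAux6

section DaCAux7

lemma sum_split2 {α β M : Type} [Fintype α] [DecidableEq α] [Fintype β] [DecidableEq β]
    [AddCommMonoid M] (P : α → Prop) [DecidablePred P]
    (F : ({x // P x} → β) → ({x // ¬ P x} → β) → M) :
    ∑ f : α → β, F (fun x => f x.1) (fun x => f x.1)
      = ∑ g : {x // P x} → β, ∑ h : {x // ¬ P x} → β, F g h := by
  classical
  have hre : (∑ g : {x // P x} → β, ∑ h : {x // ¬ P x} → β, F g h)
      = ∑ t : ({x // P x} → β) × ({x // ¬ P x} → β), F t.1 t.2 := by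
    rw [Fintype.sum_prod_type]
  rw [hre]
  refine Fintype.sum_bijective
    (fun f : α → β => ((fun (x : {x // P x}) => f x.1), (fun (x : {x // ¬ P x}) => f x.1)))
    ?_ _ (fun t => F t.1 t.2) (fun f => rfl)
  rw [Function.bijective_iff_has_inverse]
  refine ⟨fun t x => if h : P x then t.1 ⟨x, h⟩ else t.2 ⟨x, h⟩, fun f => ?_, fun t => ?_⟩
  · funext x
    by_cases h : P x <;> simp [h]
  · refine Prod.ext ?_ ?_
    · funext x
      simp [x.2]
    · funext x
      simp [x.2]

lemma sum_split4 {α β M : Type} [Fintype α] [DecidableEq α] [Fintype β] [DecidableEq β]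
    [AddCommMonoid M] (Q1 Q2 Q3 Q4 : α → Prop) [DecidablePred Q1] [DecidablePred Q2]
    [DecidablePred Q3] [DecidablePred Q4]
    (hcover : ∀ x, Q1 x ∨ Q2 x ∨ Q3 x ∨ Q4 x)
    (h12 : ∀ x, Q1 x → Q2 x → False) (h13 : ∀ x, Q1 x → Q3 x → False)
    (h14 : ∀ x, Q1 x → Q4 x → False) (h23 : ∀ x, Q2 x → Q3 x → False)
    (h24 : ∀ x, Q2 x → Q4 x → False) (h34 : ∀ x, Q3 x → Q4 x → False)
    (F : ({x // Q1 x} → β) → ({x // Q2 x} → β) → ({x // Q3 x} → β) → ({x // Q4 x} → β) → M) :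
    ∑ f : α → β, F (fun x => f x.1) (fun x => f x.1) (fun x => f x.1) (fun x => f x.1)
      = ∑ g1, ∑ g2, ∑ g3, ∑ g4, F g1 g2 g3 g4 := by
  classical
  have hre : (∑ g1, ∑ g2, ∑ g3, ∑ g4, F g1 g2 g3 g4)
      = ∑ t : ({x // Q1 x} → β) × ({x // Q2 x} → β) × ({x // Q3 x} → β) × ({x // Q4 x} → β),
          F t.1 t.2.1 t.2.2.1 t.2.2.2 := by
    rw [Fintype.sum_prod_type]
    apply Finset.sum_congr rfl; intro g1 _
    rw [Fintype.sum_prod_type]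
    apply Finset.sum_congr rfl; intro g2 _
    rw [Fintype.sum_prod_type]
  rw [hre]
  refine Fintype.sum_bijective
    (fun f : α → β => ((fun (x : {x // Q1 x}) => f x.1), (fun (x : {x // Q2 x}) => f x.1),
      (fun (x : {x // Q3 x}) => f x.1), (fun (x : {x // Q4 x}) => f x.1)))
    ?_ _ (fun t => F t.1 t.2.1 t.2.2.1 t.2.2.2) (fun f => rfl)
  rw [Function.bijective_iff_has_inverse]
  refine ⟨fun t x =>
      if h1 : Q1 x then t.1 ⟨x, h1⟩
      else if h2 : Q2 x then t.2.1 ⟨x, h2⟩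
      else if h3 : Q3 x then t.2.2.1 ⟨x, h3⟩
      else if h4 : Q4 x then t.2.2.2 ⟨x, h4⟩
      else False.elim (by rcases hcover x with h | h | h | h <;> contradiction),
    fun f => ?_, fun t => ?_⟩
  · funext x
    by_cases h1 : Q1 x
    · simp [h1]
    by_cases h2 : Q2 x
    · simp [h1, h2]
    by_cases h3 : Q3 x
    · simp [h1, h2, h3]
    by_cases h4 : Q4 x
    · simp [h1, h2, h3, h4]
    · rcases hcover x with h | h | h | h <;> contradiction
  · refine Prod.ext ?_ (Prod.ext ?_ (Prod.ext ?_ ?_))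
    · funext x
      simp [x.2]
    · funext x
      have h1 : ¬ Q1 x.1 := fun h => h12 x.1 h x.2
      simp [h1, x.2]
    · funext x
      have h1 : ¬ Q1 x.1 := fun h => h13 x.1 h x.2
      have h2 : ¬ Q2 x.1 := fun h => h23 x.1 h x.2
      simp [h1, h2, x.2]
    · funext x
      have h1 : ¬ Q1 x.1 := fun h => h14 x.1 h x.2
      have h2 : ¬ Q2 x.1 := fun h => h24 x.1 h x.2
      have h3 : ¬ Q3 x.1 := fun h => h34 x.1 h x.2
      simp [h1, h2, h3, x.2]

lemma sum_prod_bool {ι : Type} [Fintype ι] [DecidableEq ι] (p : ℝ) :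
    ∑ g : ι → Bool, ∏ e : ι, (if g e then p else 1 - p) = 1 := by
  classical
  have h := Finset.prod_univ_sum (fun _ : ι => (Finset.univ : Finset Bool))
    (fun _ b => if b then p else 1 - p)
  rw [Fintype.piFinset_univ] at h
  rw [← h]
  rw [Finset.prod_congr rfl (fun i _ => by rw [Fintype.sum_bool, if_pos rfl, if_neg (by simp)])]
  simp

lemma sum_indicator_false {ι : Type} [Fintype ι] [DecidableEq ι] :
    ∑ g : ι → Bool, (if (∀ e : ι, g e = false) then (1 : ℝ) else 0) = 1 := by
  classical
  have hcong : ∀ g : ι → Bool,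
      (if (∀ e : ι, g e = false) then (1 : ℝ) else 0)
        = if g = (fun _ => false) then (1 : ℝ) else 0 := by
    intro g
    apply if_congr _ rfl rfl
    simp [funext_iff]
  rw [Finset.sum_congr rfl (fun g _ => hcong g), Finset.sum_ite_eq' Finset.univ
    (fun _ => false) (fun _ => (1 : ℝ))]
  simp

lemma sum_factor2 {A B : Type} [Fintype A] [Fintype B] (f : A → ℝ) (g : B → ℝ) (c : ℝ) :
    ∑ a : A, ∑ b : B, f a * g b * c = (∑ a, f a) * (∑ b, g b) * c := by
  have hB : ∀ X : ℝ, ∑ b : B, X * g b = X * ∑ b, g b := fun X => (Finset.mul_sum _ _ _).symm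
  have hA : ∀ X : ℝ, ∑ a : A, X * f a = X * ∑ a, f a := fun X => (Finset.mul_sum _ _ _).symm
  calc ∑ a : A, ∑ b : B, f a * g b * c
      = ∑ a : A, ((f a * c) * ∑ b : B, g b) := by
        refine Finset.sum_congr rfl fun a _ => ?_
        rw [← hB]
        exact Finset.sum_congr rfl fun b _ => by ring
    _ = (c * ∑ b : B, g b) * ∑ a : A, f a := by
        rw [← hA]
        exact Finset.sum_congr rfl fun a _ => by ring
    _ = (∑ a, f a) * (∑ b, g b) * c := by ring

lemma sum_factor4 {A B C D : Type} [Fintype A] [Fintype B] [Fintype C] [Fintype D]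
    (f : A → ℝ) (g : B → ℝ) (u : C → ℝ) (v : D → ℝ) (c : ℝ) :
    ∑ a : A, ∑ b : B, ∑ x : C, ∑ d : D, f a * g b * u x * c * v d
      = (∑ a, f a) * (∑ b, g b) * (∑ x, u x) * c * (∑ d, v d) := by
  have hD : ∀ X : ℝ, ∑ d : D, X * v d = X * ∑ d, v d := fun X => (Finset.mul_sum _ _ _).symm
  have hC : ∀ X : ℝ, ∑ x : C, X * u x = X * ∑ x, u x := fun X => (Finset.mul_sum _ _ _).symm
  have hB : ∀ X : ℝ, ∑ b : B, X * g b = X * ∑ b, g b := fun X => (Finset.mul_sum _ _ _).symm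
  have hA : ∀ X : ℝ, ∑ a : A, X * f a = X * ∑ a, f a := fun X => (Finset.mul_sum _ _ _).symm
  calc ∑ a : A, ∑ b : B, ∑ x : C, ∑ d : D, f a * g b * u x * c * v d
      = ∑ a : A, ∑ b : B, ∑ x : C, ((f a * g b * u x * c) * ∑ d : D, v d) :=
        Finset.sum_congr rfl fun a _ => Finset.sum_congr rfl fun b _ =>
          Finset.sum_congr rfl fun x _ => hD _
    _ = ∑ a : A, ∑ b : B, ((f a * g b * c * ∑ d : D, v d) * ∑ x : C, u x) := by
        refine Finset.sum_congr rfl fun a _ => Finset.sum_congr rfl fun b _ => ?_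
        rw [← hC]
        exact Finset.sum_congr rfl fun x _ => by ring
    _ = ∑ a : A, ((f a * c * (∑ d : D, v d) * ∑ x : C, u x) * ∑ b : B, g b) := by
        refine Finset.sum_congr rfl fun a _ => ?_
        rw [← hB]
        exact Finset.sum_congr rfl fun b _ => by ring
    _ = (c * (∑ d : D, v d) * (∑ x : C, u x) * ∑ b : B, g b) * ∑ a : A, f a := by
        rw [← hA]
        exact Finset.sum_congr rfl fun a _ => by ring
    _ = (∑ a, f a) * (∑ b, g b) * (∑ x, u x) * c * (∑ d, v d) := by ring

end DaCAux7

section DaCAux8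

variable {V E : Type}

open Classical in
lemma dacW_num [Fintype V] [DecidableEq V] [Fintype E] [DecidableEq E]
    (ends : E → V × V) (p q : ℝ) {s : ℕ} (a : Fin s → ℝ) (hq : q ≠ 0)
    (V1 : Finset V) (B0 : Finset E) (hB0 : ∀ e ∈ B0, crossing ends V1 e)
    (σ : V → Fin s)
    (hσq : ∀ x ∈ bridgeVerts ends V1 B0, a (σ x) = 1 / q)
    (hσeq : ∀ e : E, crossing ends V1 e → e ∉ B0 → σ (ends e).1 = σ (ends e).2)
    (ξ : V → Fin s) (η : E → Bool) :
    (if (∀ e ∈ B0, η e = false) ∧ (∀ x ∈ bridgeVerts ends V1 B0, ξ x = σ x) then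
        dacW ends p q a ξ η
      else 0)
    = (if ∀ x : {v : V // v ∈ V1}, x.1 ∈ bridgeVerts ends V1 B0 → ξ x.1 = σ x.1 then
          dacW (restrEnds ends (fun v => v ∈ V1)) p q a (fun x => ξ x.1) (fun e => η e.1)
        else 0)
      * (if ∀ x : {v : V // v ∉ V1}, x.1 ∈ bridgeVerts ends V1 B0 → ξ x.1 = σ x.1 then
          dacW (restrEnds ends (fun v => v ∉ V1)) p q a (fun x => ξ x.1) (fun e => η e.1)
        else 0)
      * (if ∀ e : {e : E // e ∈ B0}, η e.1 = false then (1 : ℝ) else 0)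
      * (∏ e ∈ B0, (1 - p))
      * ∏ e : {e : E // crossing ends V1 e ∧ e ∉ B0}, (if η e.1 then p else 1 - p) := by
  classical
  by_cases hC : (∀ e ∈ B0, η e = false) ∧ (∀ x ∈ bridgeVerts ends V1 B0, ξ x = σ x)
  · rw [if_pos hC]
    obtain ⟨hη0, hξσ⟩ := hC
    rw [if_pos (fun e : {e : E // e ∈ B0} => hη0 e.1 e.2)]
    rw [if_pos (fun (x : {v : V // v ∈ V1}) hx => hξσ x.1 hx)]
    rw [if_pos (fun (x : {v : V // v ∉ V1}) hx => hξσ x.1 hx)]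
    by_cases hcompat : compatible ends η ξ
    · have h1 := compat_restrict ends η ξ (fun v => v ∈ V1) hcompat
      have h2 := compat_restrict ends η ξ (fun v => v ∉ V1) hcompat
      haveI := Fintype.ofFinite (Quot (openRel ends η))
      haveI := Fintype.ofFinite
        (Quot (openRel (restrEnds ends (fun v => v ∈ V1)) (fun e => η e.1)))
      haveI := Fintype.ofFinite
        (Quot (openRel (restrEnds ends (fun v => v ∉ V1)) (fun e => η e.1)))
      have hcp := prodComp ends η q a ξ hcompat
      have hcp1 := prodComp (restrEnds ends (fun v => v ∈ V1)) (fun e => η e.1) q a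
        (fun x => ξ x.1) h1
      have hcp2 := prodComp (restrEnds ends (fun v => v ∉ V1)) (fun e => η e.1) q a
        (fun x => ξ x.1) h2
      have hsplit := prod_quot_split ends q a hq V1 B0 η ξ σ hη0 hξσ hσq hcompat h1 h2
      have hedge := edge_prod_split ends p V1 B0 hB0 η hη0
      have hA : q ^ numComp ends η * ∏ i : Fin s, a i ^ spinCompCount ends η ξ i
          = (q ^ numComp (restrEnds ends (fun v => v ∈ V1)) (fun e => η e.1)
              * ∏ i : Fin s, a i ^ spinCompCount (restrEnds ends (fun v => v ∈ V1))
                  (fun e => η e.1) (fun x => ξ x.1) i)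
            * (q ^ numComp (restrEnds ends (fun v => v ∉ V1)) (fun e => η e.1)
              * ∏ i : Fin s, a i ^ spinCompCount (restrEnds ends (fun v => v ∉ V1))
                  (fun e => η e.1) (fun x => ξ x.1) i) := by
        rw [hcp, hcp1, hcp2]
        exact hsplit
      unfold dacW rcWeight
      rw [if_pos hcompat, if_pos h1, if_pos h2]
      rw [hedge]
      beta_reduce
      linear_combination ((∏ e : { e : E // (ends e).1 ∈ V1 ∧ (ends e).2 ∈ V1 },
            if η e.1 = true then p else 1 - p)
          * (∏ e : { e : E // (ends e).1 ∉ V1 ∧ (ends e).2 ∉ V1 },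
            if η e.1 = true then p else 1 - p)
          * (∏ e ∈ B0, (1 - p))
          * ∏ e : { e : E // crossing ends V1 e ∧ e ∉ B0 },
            if η e.1 = true then p else 1 - p) * hA
    · have hnot : ¬ (compatible (restrEnds ends (fun v => v ∈ V1)) (fun e => η e.1)
          (fun x => ξ x.1)
        ∧ compatible (restrEnds ends (fun v => v ∉ V1)) (fun e => η e.1) (fun x => ξ x.1)) :=
        fun ⟨hh1, hh2⟩ => hcompat
          (compat_of_parts ends η ξ σ V1 B0 hη0 hξσ hσeq hh1 hh2)
      have hzero : dacW ends p q a ξ η = 0 := by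
        unfold dacW
        rw [if_neg hcompat]
      rw [hzero]
      rcases not_and_or.mp hnot with h | h
      · have : dacW (restrEnds ends (fun v => v ∈ V1)) p q a (fun x => ξ x.1)
            (fun e => η e.1) = 0 := by
          unfold dacW
          rw [if_neg h]
        rw [this]
        ring
      · have : dacW (restrEnds ends (fun v => v ∉ V1)) p q a (fun x => ξ x.1)
            (fun e => η e.1) = 0 := by
          unfold dacW
          rw [if_neg h]
        rw [this]
        ring
  · rw [if_neg hC]
    rcases not_and_or.mp hC with h | h
    · rw [if_neg (fun hall : ∀ e : {e : E // e ∈ B0}, η e.1 = false =>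
        h (fun e he => hall ⟨e, he⟩))]
      ring
    · push_neg at h
      obtain ⟨x, hxW, hxne⟩ := h
      by_cases hx1 : x ∈ V1
      · rw [if_neg (fun hall : ∀ x : {v : V // v ∈ V1},
          x.1 ∈ bridgeVerts ends V1 B0 → ξ x.1 = σ x.1 => hxne (hall ⟨x, hx1⟩ hxW))]
        ring
      · rw [if_neg (fun hall : ∀ x : {v : V // v ∉ V1},
          x.1 ∈ bridgeVerts ends V1 B0 → ξ x.1 = σ x.1 => hxne (hall ⟨x, hx1⟩ hxW))]
        ring

end DaCAux8

section DaCAux9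

variable {V E : Type}

open Classical in
/-- The unnormalized one-sided sum. -/
noncomputable def sideSum [Fintype V] [DecidableEq V] [Fintype E] [DecidableEq E]
    (ends : E → V × V) (p q : ℝ) {s : ℕ} (a : Fin s → ℝ) (P : V → Prop) (Wv : Set V)
    (σ : V → Fin s) : ℝ :=
  ∑ ξ1 : {v : V // P v} → Fin s,
    ∑ η1 : {e : E // P (ends e).1 ∧ P (ends e).2} → Bool,
      if ∀ x : {v : V // P v}, (x : V) ∈ Wv → ξ1 x = σ (x : V) then
        dacW (restrEnds ends P) p q a ξ1 η1 else 0

open Classical in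
lemma probK_eq [Fintype V] [DecidableEq V] [Fintype E] [DecidableEq E]
    (ends : E → V × V) (p q : ℝ) {s : ℕ} (a : Fin s → ℝ) (P : V → Prop) (Wv : Set V)
    (σ : V → Fin s) :
    probK ends p q a P Wv σ
      = sideSum ends p q a P Wv σ / rcZ (restrEnds ends P) p q := by
  unfold probK sideSum
  rw [Finset.sum_div]
  apply Finset.sum_congr rfl
  intro ξ1 _
  rw [Finset.sum_div]
  apply Finset.sum_congr rfl
  intro η1 _
  rw [dacP_eq]
  split
  · rfl
  · simp


lemma dacW_congr_inst {V' E' : Type} (i1 i2 : Fintype E') (d : DecidableEq E')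
    (ends' : E' → V' × V') (p q : ℝ) {s : ℕ} (a : Fin s → ℝ) (ξ : V' → Fin s) (η : E' → Bool) :
    @dacW V' E' i1 d ends' p q s a ξ η = @dacW V' E' i2 d ends' p q s a ξ η := by
  cases Subsingleton.elim i1 i2
  rfl

lemma ite_congr_inst {α : Type} {c : Prop} (i1 i2 : Decidable c) {x1 x2 y1 y2 : α}
    (hx : x1 = x2) (hy : y1 = y2) : @ite α c i1 x1 y1 = @ite α c i2 x2 y2 := by
  cases Subsingleton.elim i1 i2
  rw [hx, hy]

lemma rcZ_congr_inst {V' E' : Type} {i1 : Fintype E'} {d1 : DecidableEq E'}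
    (i2 : Fintype E') (d2 : DecidableEq E') (ends' : E' → V' × V') (p q : ℝ) :
    @rcZ V' E' i1 d1 ends' p q = @rcZ V' E' i2 d2 ends' p q := by
  cases Subsingleton.elim i1 i2
  cases Subsingleton.elim d1 d2
  rfl

lemma sum_univ_congr {α M : Type} [AddCommMonoid M] {i1 i2 : Fintype α} (f g : α → M)
    (h : ∀ x, f x = g x) :
    @Finset.sum α M _ (@Finset.univ α i1) f = @Finset.sum α M _ (@Finset.univ α i2) g := by
  cases Subsingleton.elim i1 i2
  exact Finset.sum_congr rfl (fun x _ => h x)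

set_option maxHeartbeats 2000000 in
open Classical in
lemma probC_eq [Fintype V] [DecidableEq V] [Fintype E] [DecidableEq E]
    (ends : E → V × V) (p q : ℝ) {s : ℕ} (a : Fin s → ℝ) (hq : q ≠ 0)
    (V1 : Finset V) (B0 : Finset E) (hB0 : ∀ e ∈ B0, crossing ends V1 e)
    (σ : V → Fin s)
    (hσq : ∀ x ∈ bridgeVerts ends V1 B0, a (σ x) = 1 / q)
    (hσeq : ∀ e : E, crossing ends V1 e → e ∉ B0 → σ (ends e).1 = σ (ends e).2) :
    probC ends p q a V1 B0 σ
      = (sideSum ends p q a (fun v => v ∈ V1) (bridgeVerts ends V1 B0) σ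
          * sideSum ends p q a (fun v => v ∉ V1) (bridgeVerts ends V1 B0) σ
          * ∏ e ∈ B0, (1 - p)) / rcZ ends p q := by
  classical
  unfold probC
  have hZdiv : ∀ (ξ : V → Fin s) (η : E → Bool),
      (if (∀ e ∈ B0, η e = false) ∧ (∀ x ∈ bridgeVerts ends V1 B0, ξ x = σ x)
        then dacP ends p q a ξ η else 0)
      = (if (∀ e ∈ B0, η e = false) ∧ (∀ x ∈ bridgeVerts ends V1 B0, ξ x = σ x)
        then dacW ends p q a ξ η else 0) / rcZ ends p q := by
    intro ξ η
    rw [dacP_eq]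
    split
    · rfl
    · simp
  rw [Finset.sum_congr rfl (fun ξ _ => Finset.sum_congr rfl (fun η _ => hZdiv ξ η))]
  rw [Finset.sum_congr rfl (fun ξ _ => (Finset.sum_div _ _ _).symm), ← Finset.sum_div]
  congr 1
  rw [Finset.sum_congr rfl (fun ξ _ => Finset.sum_congr rfl
    (fun η _ => dacW_num ends p q a hq V1 B0 hB0 σ hσq hσeq ξ η))]
  have hcover : ∀ e : E, ((ends e).1 ∈ V1 ∧ (ends e).2 ∈ V1)
      ∨ ((ends e).1 ∉ V1 ∧ (ends e).2 ∉ V1) ∨ (e ∈ B0)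
      ∨ (crossing ends V1 e ∧ e ∉ B0) := by
    intro e
    have := hB0 e
    unfold crossing at *
    by_cases h1 : (ends e).1 ∈ V1 <;> by_cases h2 : (ends e).2 ∈ V1 <;>
      by_cases hb : e ∈ B0 <;> tauto
  have h12 : ∀ e : E, ((ends e).1 ∈ V1 ∧ (ends e).2 ∈ V1) →
      ((ends e).1 ∉ V1 ∧ (ends e).2 ∉ V1) → False := by tauto
  have h13 : ∀ e : E, ((ends e).1 ∈ V1 ∧ (ends e).2 ∈ V1) → e ∈ B0 → False := by
    intro e he hb
    have := hB0 e hb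
    unfold crossing at this
    tauto
  have h14 : ∀ e : E, ((ends e).1 ∈ V1 ∧ (ends e).2 ∈ V1) →
      (crossing ends V1 e ∧ e ∉ B0) → False := by
    intro e he hb
    unfold crossing at hb
    tauto
  have h23 : ∀ e : E, ((ends e).1 ∉ V1 ∧ (ends e).2 ∉ V1) → e ∈ B0 → False := by
    intro e he hb
    have := hB0 e hb
    unfold crossing at this
    tauto
  have h24 : ∀ e : E, ((ends e).1 ∉ V1 ∧ (ends e).2 ∉ V1) →
      (crossing ends V1 e ∧ e ∉ B0) → False := by
    intro e he hb
    unfold crossing at hb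
    tauto
  have h34 : ∀ e : E, e ∈ B0 → (crossing ends V1 e ∧ e ∉ B0) → False := by tauto
  have hinner : ∀ ξ : V → Fin s,
      (∑ η : E → Bool,
        (if ∀ x : {v : V // v ∈ V1}, (x : V) ∈ bridgeVerts ends V1 B0 → ξ (x : V) = σ (x : V) then
            dacW (restrEnds ends (fun v => v ∈ V1)) p q a (fun x => ξ x.1) (fun e => η e.1)
          else 0)
        * (if ∀ x : {v : V // v ∉ V1}, (x : V) ∈ bridgeVerts ends V1 B0 → ξ (x : V) = σ (x : V) then
            dacW (restrEnds ends (fun v => v ∉ V1)) p q a (fun x => ξ x.1) (fun e => η e.1)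
          else 0)
        * (if ∀ e : {e : E // e ∈ B0}, η e.1 = false then (1 : ℝ) else 0)
        * (∏ e ∈ B0, (1 - p))
        * ∏ e : {e : E // crossing ends V1 e ∧ e ∉ B0}, (if η e.1 then p else 1 - p))
      = (∑ η1 : {e : E // (ends e).1 ∈ V1 ∧ (ends e).2 ∈ V1} → Bool,
          if ∀ x : {v : V // v ∈ V1}, (x : V) ∈ bridgeVerts ends V1 B0 → ξ (x : V) = σ (x : V) then
            dacW (restrEnds ends (fun v => v ∈ V1)) p q a (fun x => ξ x.1) η1 else 0)
        * (∑ η2 : {e : E // (ends e).1 ∉ V1 ∧ (ends e).2 ∉ V1} → Bool,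
          if ∀ x : {v : V // v ∉ V1}, (x : V) ∈ bridgeVerts ends V1 B0 → ξ (x : V) = σ (x : V) then
            dacW (restrEnds ends (fun v => v ∉ V1)) p q a (fun x => ξ x.1) η2 else 0)
        * (∏ e ∈ B0, (1 - p)) := by
    intro ξ
    calc (∑ η : E → Bool,
        (if ∀ x : {v : V // v ∈ V1}, (x : V) ∈ bridgeVerts ends V1 B0 → ξ (x : V) = σ (x : V) then
            dacW (restrEnds ends (fun v => v ∈ V1)) p q a (fun x => ξ x.1) (fun e => η e.1)
          else 0)
        * (if ∀ x : {v : V // v ∉ V1}, (x : V) ∈ bridgeVerts ends V1 B0 → ξ (x : V) = σ (x : V) then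
            dacW (restrEnds ends (fun v => v ∉ V1)) p q a (fun x => ξ x.1) (fun e => η e.1)
          else 0)
        * (if ∀ e : {e : E // e ∈ B0}, η e.1 = false then (1 : ℝ) else 0)
        * (∏ e ∈ B0, (1 - p))
        * ∏ e : {e : E // crossing ends V1 e ∧ e ∉ B0}, (if η e.1 then p else 1 - p))
        = ∑ g1 : {e : E // (ends e).1 ∈ V1 ∧ (ends e).2 ∈ V1} → Bool,
          ∑ g2 : {e : E // (ends e).1 ∉ V1 ∧ (ends e).2 ∉ V1} → Bool,
          ∑ g3 : {e : E // e ∈ B0} → Bool,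
          ∑ g4 : {e : E // crossing ends V1 e ∧ e ∉ B0} → Bool,
          (if ∀ x : {v : V // v ∈ V1}, (x : V) ∈ bridgeVerts ends V1 B0 → ξ (x : V) = σ (x : V) then
            dacW (restrEnds ends (fun v => v ∈ V1)) p q a (fun x => ξ x.1) g1 else 0)
          * (if ∀ x : {v : V // v ∉ V1}, (x : V) ∈ bridgeVerts ends V1 B0 → ξ (x : V) = σ (x : V) then
            dacW (restrEnds ends (fun v => v ∉ V1)) p q a (fun x => ξ x.1) g2 else 0)
          * (if ∀ e : {e : E // e ∈ B0}, g3 e = false then (1 : ℝ) else 0)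
          * (∏ e ∈ B0, (1 - p))
          * ∏ e : {e : E // crossing ends V1 e ∧ e ∉ B0}, (if g4 e then p else 1 - p) := by
          refine (sum_split4 _ _ _ _ hcover h12 h13 h14 h23 h24 h34
            (fun g1 g2 g3 g4 =>
              (if ∀ x : {v : V // v ∈ V1}, (x : V) ∈ bridgeVerts ends V1 B0 → ξ (x : V) = σ (x : V) then
                dacW (restrEnds ends (fun v => v ∈ V1)) p q a (fun x => ξ x.1) g1 else 0)
              * (if ∀ x : {v : V // v ∉ V1}, (x : V) ∈ bridgeVerts ends V1 B0 → ξ (x : V) = σ (x : V) then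
                dacW (restrEnds ends (fun v => v ∉ V1)) p q a (fun x => ξ x.1) g2 else 0)
              * (if ∀ e : {e : E // e ∈ B0}, g3 e = false then (1 : ℝ) else 0)
              * (∏ e ∈ B0, (1 - p))
              * ∏ e : {e : E // crossing ends V1 e ∧ e ∉ B0}, (if g4 e then p else 1 - p))).trans ?_
          refine sum_univ_congr _ _ (fun g1 => sum_univ_congr _ _ (fun g2 =>
            sum_univ_congr _ _ (fun g3 => sum_univ_congr _ _ (fun g4 => ?_))))
          have hg3 : (if ∀ e : {e : E // e ∈ B0}, g3 e = false then (1 : ℝ) else 0)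
              = (if ∀ e : {e : E // e ∈ B0}, g3 e = false then (1 : ℝ) else 0) :=
            ite_congr_inst _ _ rfl rfl
          exact congrArg₂ (· * ·) (congrArg₂ (· * ·) (congrArg₂ (· * ·) rfl hg3) rfl) rfl
      _ = (∑ g1 : {e : E // (ends e).1 ∈ V1 ∧ (ends e).2 ∈ V1} → Bool,
          if ∀ x : {v : V // v ∈ V1}, (x : V) ∈ bridgeVerts ends V1 B0 → ξ (x : V) = σ (x : V) then
            dacW (restrEnds ends (fun v => v ∈ V1)) p q a (fun x => ξ x.1) g1 else 0)
          * (∑ g2 : {e : E // (ends e).1 ∉ V1 ∧ (ends e).2 ∉ V1} → Bool,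
          if ∀ x : {v : V // v ∉ V1}, (x : V) ∈ bridgeVerts ends V1 B0 → ξ (x : V) = σ (x : V) then
            dacW (restrEnds ends (fun v => v ∉ V1)) p q a (fun x => ξ x.1) g2 else 0)
          * (∑ g3 : {e : E // e ∈ B0} → Bool,
            if ∀ e : {e : E // e ∈ B0}, g3 e = false then (1 : ℝ) else 0)
          * (∏ e ∈ B0, (1 - p))
          * (∑ g4 : {e : E // crossing ends V1 e ∧ e ∉ B0} → Bool,
            ∏ e : {e : E // crossing ends V1 e ∧ e ∉ B0}, (if g4 e then p else 1 - p)) := by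
          exact sum_factor4
            (fun g1 : {e : E // (ends e).1 ∈ V1 ∧ (ends e).2 ∈ V1} → Bool =>
              if ∀ x : {v : V // v ∈ V1}, (x : V) ∈ bridgeVerts ends V1 B0 → ξ (x : V) = σ (x : V) then
                dacW (restrEnds ends (fun v => v ∈ V1)) p q a (fun x => ξ x.1) g1 else 0)
            (fun g2 : {e : E // (ends e).1 ∉ V1 ∧ (ends e).2 ∉ V1} → Bool =>
              if ∀ x : {v : V // v ∉ V1}, (x : V) ∈ bridgeVerts ends V1 B0 → ξ (x : V) = σ (x : V) then
                dacW (restrEnds ends (fun v => v ∉ V1)) p q a (fun x => ξ x.1) g2 else 0)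
            (fun g3 : {e : E // e ∈ B0} → Bool =>
              if ∀ e : {e : E // e ∈ B0}, g3 e = false then (1 : ℝ) else 0)
            (fun g4 : {e : E // crossing ends V1 e ∧ e ∉ B0} → Bool =>
              ∏ e : {e : E // crossing ends V1 e ∧ e ∉ B0}, (if g4 e then p else 1 - p))
            (∏ e ∈ B0, (1 - p))
      _ = _ := by
          rw [sum_indicator_false, sum_prod_bool]
          ring
  rw [Finset.sum_congr rfl (fun ξ _ => hinner ξ)]
  have hchain := (sum_split2 (fun v => v ∈ V1)
      (fun (g1 : {v : V // v ∈ V1} → Fin s) (g2 : {v : V // ¬ v ∈ V1} → Fin s) =>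
        (∑ η1 : {e : E // (ends e).1 ∈ V1 ∧ (ends e).2 ∈ V1} → Bool,
          if ∀ x : {v : V // v ∈ V1}, (x : V) ∈ bridgeVerts ends V1 B0 → g1 x = σ (x : V) then
            dacW (restrEnds ends (fun v => v ∈ V1)) p q a g1 η1 else 0)
        * (∑ η2 : {e : E // (ends e).1 ∉ V1 ∧ (ends e).2 ∉ V1} → Bool,
          if ∀ x : {v : V // v ∉ V1}, (x : V) ∈ bridgeVerts ends V1 B0 → g2 x = σ (x : V) then
            dacW (restrEnds ends (fun v => v ∉ V1)) p q a g2 η2 else 0)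
        * (∏ e ∈ B0, (1 - p)))).trans
    ((sum_univ_congr _ _ (fun g1 => sum_univ_congr _ _ (fun g2 => rfl))).trans
      (sum_factor2
        (fun g1 : {v : V // v ∈ V1} → Fin s =>
          ∑ η1 : {e : E // (ends e).1 ∈ V1 ∧ (ends e).2 ∈ V1} → Bool,
            if ∀ x : {v : V // v ∈ V1}, (x : V) ∈ bridgeVerts ends V1 B0 → g1 x = σ (x : V) then
              dacW (restrEnds ends (fun v => v ∈ V1)) p q a g1 η1 else 0)
        (fun g2 : {v : V // ¬ v ∈ V1} → Fin s =>
          ∑ η2 : {e : E // (ends e).1 ∉ V1 ∧ (ends e).2 ∉ V1} → Bool,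
            if ∀ x : {v : V // v ∉ V1}, (x : V) ∈ bridgeVerts ends V1 B0 → g2 x = σ (x : V) then
              dacW (restrEnds ends (fun v => v ∉ V1)) p q a g2 η2 else 0)
        (∏ e ∈ B0, (1 - p))))
  refine hchain.trans ?_
  have e1 : (∑ g1 : {v : V // v ∈ V1} → Fin s,
        ∑ η1 : {e : E // (ends e).1 ∈ V1 ∧ (ends e).2 ∈ V1} → Bool,
          if ∀ x : {v : V // v ∈ V1}, (x : V) ∈ bridgeVerts ends V1 B0 → g1 x = σ (x : V) then
            dacW (restrEnds ends (fun v => v ∈ V1)) p q a g1 η1 else 0)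
      = sideSum ends p q a (fun v => v ∈ V1) (bridgeVerts ends V1 B0) σ := by
    unfold sideSum
    exact sum_univ_congr _ _ (fun g1 => sum_univ_congr _ _
      (fun h1 => ite_congr_inst _ _ (dacW_congr_inst _ _ _ _ _ _ _ _ _) rfl))
  have e2 : (∑ g2 : {v : V // ¬ v ∈ V1} → Fin s,
        ∑ η2 : {e : E // (ends e).1 ∉ V1 ∧ (ends e).2 ∉ V1} → Bool,
          if ∀ x : {v : V // v ∉ V1}, (x : V) ∈ bridgeVerts ends V1 B0 → g2 x = σ (x : V) then
            dacW (restrEnds ends (fun v => v ∉ V1)) p q a g2 η2 else 0)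
      = sideSum ends p q a (fun v => v ∉ V1) (bridgeVerts ends V1 B0) σ := by
    unfold sideSum
    exact sum_univ_congr _ _ (fun g2 => sum_univ_congr _ _
      (fun h2 => ite_congr_inst _ _ (dacW_congr_inst _ _ _ _ _ _ _ _ _) rfl))
  rw [e1, e2]
end DaCAux9
set_option maxHeartbeats 2000000 in
open Classical in
/-- quasi-closed barrier factorization (Lemma 3.4). Conditionally on
the event `C(B,σ)` (all edges of `B0 ⊆ B` closed, spins on `W_1 ∪ W_2` equal to the
`S_{1/q}`-valued `σ`, which agrees across each retained crossing edge), the DaC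
configuration factorizes over the two sides: for every `(ξ,η)`,
`P^G((ξ,η) | C(B,σ)) = P^{G_1}((ξ_{V_1},η_{E_1}) | K_1) · P^{G_2}((ξ_{V_2},η_{E_2}) | K_2)
· 1{η ≡ 0 on B0} · ∏_{e ∈ B∖B0} p^{η(e)}(1-p)^{1-η(e)}`;
in particular the two sides are conditionally independent. -/
theorem dac_quasi_closed_barrier_factorization {V E : Type}
    [Fintype V] [DecidableEq V] [Fintype E] [DecidableEq E]
    (ends : E → V × V) (p q : ℝ) (hp : p ∈ Set.Icc (0 : ℝ) 1) (hq : 0 < q)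
    (s : ℕ) (hs : 2 ≤ s) (a : Fin s → ℝ) (ha : ∀ i, a i ∈ Set.Ioo (0 : ℝ) 1)
    (hsum : ∑ i : Fin s, a i = 1)
    (V1 : Finset V) (B0 : Finset E) (hB0 : ∀ e ∈ B0, crossing ends V1 e)
    (σ : V → Fin s)
    (hσq : ∀ x ∈ bridgeVerts ends V1 B0, a (σ x) = 1 / q)
    (hσeq : ∀ e : E, crossing ends V1 e → e ∉ B0 → σ (ends e).1 = σ (ends e).2)
    (hPC : 0 < probC ends p q a V1 B0 σ)
    (hPK1 : 0 < probK ends p q a (fun v => v ∈ V1) (bridgeVerts ends V1 B0) σ)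
    (hPK2 : 0 < probK ends p q a (fun v => v ∉ V1) (bridgeVerts ends V1 B0) σ)
    (ξ : V → Fin s) (η : E → Bool) :
    (if (∀ e ∈ B0, η e = false) ∧ (∀ x ∈ bridgeVerts ends V1 B0, ξ x = σ x) then
        dacP ends p q a ξ η
      else 0) / probC ends p q a V1 B0 σ
    =
    ((if ∀ x : {v : V // v ∈ V1}, (x : V) ∈ bridgeVerts ends V1 B0 → ξ (x : V) = σ (x : V) then
          dacP (restrEnds ends (fun v => v ∈ V1)) p q a
            (fun x => ξ (x : V)) (fun e => η (e : E))
        else 0) / probK ends p q a (fun v => v ∈ V1) (bridgeVerts ends V1 B0) σ)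
    * ((if ∀ x : {v : V // v ∉ V1}, (x : V) ∈ bridgeVerts ends V1 B0 → ξ (x : V) = σ (x : V) then
          dacP (restrEnds ends (fun v => v ∉ V1)) p q a
            (fun x => ξ (x : V)) (fun e => η (e : E))
        else 0) / probK ends p q a (fun v => v ∉ V1) (bridgeVerts ends V1 B0) σ)
    * (if ∀ e ∈ B0, η e = false then (1 : ℝ) else 0)
    * ∏ e ∈ Finset.univ.filter (fun e : E => crossing ends V1 e ∧ e ∉ B0),
        (if η e then p else 1 - p) := by
    classical
  have hqne : q ≠ 0 := ne_of_gt hq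
  have hK1eq := probK_eq ends p q a (fun v => v ∈ V1) (bridgeVerts ends V1 B0) σ
  have hK2eq := probK_eq ends p q a (fun v => v ∉ V1) (bridgeVerts ends V1 B0) σ
  have hPCeq := probC_eq ends p q a hqne V1 B0 hB0 σ hσq hσeq
  rw [rcZ_congr_inst inferInstance inferInstance (restrEnds ends (fun v => v ∈ V1)) p q] at hK1eq
  rw [rcZ_congr_inst inferInstance inferInstance (restrEnds ends (fun v => v ∉ V1)) p q] at hK2eq
  have hZ1 : rcZ (restrEnds ends (fun v => v ∈ V1)) p q ≠ 0 := by
    intro h0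
    rw [h0, div_zero] at hK1eq
    rw [hK1eq] at hPK1
    exact lt_irrefl 0 hPK1
  have hZ2 : rcZ (restrEnds ends (fun v => v ∉ V1)) p q ≠ 0 := by
    intro h0
    rw [h0, div_zero] at hK2eq
    rw [hK2eq] at hPK2
    exact lt_irrefl 0 hPK2
  have hS1ne : sideSum ends p q a (fun v => v ∈ V1) (bridgeVerts ends V1 B0) σ ≠ 0 := by
    intro h0
    rw [h0, zero_div] at hK1eq
    rw [hK1eq] at hPK1
    exact lt_irrefl 0 hPK1
  have hS2ne : sideSum ends p q a (fun v => v ∉ V1) (bridgeVerts ends V1 B0) σ ≠ 0 := by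
    intro h0
    rw [h0, zero_div] at hK2eq
    rw [hK2eq] at hPK2
    exact lt_irrefl 0 hPK2
  have hZ : rcZ ends p q ≠ 0 := by
    intro h0
    rw [h0, div_zero] at hPCeq
    rw [hPCeq] at hPC
    exact lt_irrefl 0 hPC
  have hc0 : (∏ e ∈ B0, (1 - p)) ≠ 0 := by
    intro h0
    rw [h0, mul_zero, zero_div] at hPCeq
    rw [hPCeq] at hPC
    exact lt_irrefl 0 hPC
  have hnum : (if (∀ e ∈ B0, η e = false) ∧ (∀ x ∈ bridgeVerts ends V1 B0, ξ x = σ x) then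
        dacP ends p q a ξ η else 0)
      = (if (∀ e ∈ B0, η e = false) ∧ (∀ x ∈ bridgeVerts ends V1 B0, ξ x = σ x) then
        dacW ends p q a ξ η else 0) / rcZ ends p q := by
    rw [dacP_eq]
    split
    · rfl
    · simp
  have hnum1 : (if ∀ x : {v : V // v ∈ V1}, (x : V) ∈ bridgeVerts ends V1 B0 → ξ (x : V) = σ (x : V) then
        dacP (restrEnds ends (fun v => v ∈ V1)) p q a (fun x => ξ (x : V)) (fun e => η (e : E))
      else 0)
      = (if ∀ x : {v : V // v ∈ V1}, (x : V) ∈ bridgeVerts ends V1 B0 → ξ (x : V) = σ (x : V) then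
        dacW (restrEnds ends (fun v => v ∈ V1)) p q a (fun x => ξ (x : V)) (fun e => η (e : E))
      else 0) / rcZ (restrEnds ends (fun v => v ∈ V1)) p q := by
    rw [dacP_eq]
    split
    · rfl
    · simp
  have hnum2 : (if ∀ x : {v : V // v ∉ V1}, (x : V) ∈ bridgeVerts ends V1 B0 → ξ (x : V) = σ (x : V) then
        dacP (restrEnds ends (fun v => v ∉ V1)) p q a (fun x => ξ (x : V)) (fun e => η (e : E))
      else 0)
      = (if ∀ x : {v : V // v ∉ V1}, (x : V) ∈ bridgeVerts ends V1 B0 → ξ (x : V) = σ (x : V) then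
        dacW (restrEnds ends (fun v => v ∉ V1)) p q a (fun x => ξ (x : V)) (fun e => η (e : E))
      else 0) / rcZ (restrEnds ends (fun v => v ∉ V1)) p q := by
    rw [dacP_eq]
    split
    · rfl
    · simp
  rw [hnum, hnum1, hnum2, hPCeq, hK1eq, hK2eq]
  rw [dacW_num ends p q a hqne V1 B0 hB0 σ hσq hσeq ξ η]
  have hind : (if ∀ e ∈ B0, η e = false then (1 : ℝ) else 0)
      = (if ∀ e : {e : E // e ∈ B0}, η e.1 = false then (1 : ℝ) else 0) := by
    apply if_congr _ rfl rfl
    exact ⟨fun h e => h e.1 e.2, fun h e he => h ⟨e, he⟩⟩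
  rw [hind]
  have hprodeq : (∏ e ∈ Finset.univ.filter (fun e : E => crossing ends V1 e ∧ e ∉ B0),
        (if η e then p else 1 - p))
      = ∏ e : {e : E // crossing ends V1 e ∧ e ∉ B0}, (if η e.1 then p else 1 - p) :=
    Finset.prod_subtype _ (by simp) _
  rw [hprodeq]
  field_simp
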